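/- Let A be a subset of ℤ, q a real number, n ≥ 1 a natural number, and F a finite nonempty subset of ℤ such that |A ∩ (i + F)| > q·|F| for every i with 1 ≤ i ≤ n. Then there exists m ∈ F such that |A ∩ [m+1, m+n]| > q·n. -/

import Mathlib

open scoped Classical

/-- The counting argument in Remark 3.3: if `|A ∩ (i + F)| > q·|F|` for every
`1 ≤ i ≤ n`, then some `m ∈ F` satisfies `|A ∩ [m+1, m+n]| > q·n`. -/
theorem exists_interval_of_translates (A : Set ℤ) (q : ℝ) (n : ℕ) (hn : 1 ≤ n)
    (F : Finset ℤ) (hFne : F.Nonempty)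
    (h : ∀ i : ℤ, 1 ≤ i → i ≤ (n : ℤ) →
      q * (F.card : ℝ) < (((F.image (i + ·)).filter (· ∈ A)).card : ℝ)) :
    ∃ m ∈ F, q * (n : ℝ) <
      (((Finset.Icc (m + 1) (m + (n : ℤ))).filter (· ∈ A)).card : ℝ) := by
  -- rewrite each translate count as a filter on F
  have key : ∀ i : ℤ, ((F.image (i + ·)).filter (· ∈ A)).card
      = (F.filter (fun f => (i + f) ∈ A)).card := by
    intro i
    rw [Finset.filter_image]
    exact (Finset.card_image_of_injective _ (add_right_injective i))
  -- double counting
  have swap : ∑ i ∈ Finset.Icc (1 : ℤ) (n : ℤ), ((F.image (i + ·)).filter (· ∈ A)).card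
      = ∑ m ∈ F, ((Finset.Icc (m + 1) (m + (n : ℤ))).filter (· ∈ A)).card := by
    simp only [key, Finset.card_filter]
    rw [Finset.sum_comm]
    refine Finset.sum_congr rfl (fun m hm => ?_)
    rw [show Finset.Icc (m + 1) (m + (n : ℤ)) = (Finset.Icc (1 : ℤ) (n : ℤ)).image (m + ·) by
      ext x
      simp only [Finset.mem_image, Finset.mem_Icc]
      constructor
      · rintro ⟨h1, h2⟩; exact ⟨x - m, ⟨by omega, by omega⟩, by omega⟩
      · rintro ⟨y, ⟨h1, h2⟩, rfl⟩; omega]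
    rw [Finset.sum_image (by intros a _ b _ hab; exact add_left_cancel hab)]
    refine Finset.sum_congr rfl (fun i _ => ?_)
    rw [add_comm m i]
  -- sum lower bound
  have hsum : q * (n : ℝ) * (F.card : ℝ)
      < ∑ m ∈ F, (((Finset.Icc (m + 1) (m + (n : ℤ))).filter (· ∈ A)).card : ℝ) := by
    have : ∑ i ∈ Finset.Icc (1 : ℤ) (n : ℤ), q * (F.card : ℝ)
        < ∑ i ∈ Finset.Icc (1 : ℤ) (n : ℤ),
            (((F.image (i + ·)).filter (· ∈ A)).card : ℝ) := by
      refine Finset.sum_lt_sum_of_nonempty ?_ (fun i hi => ?_)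
      · refine ⟨1, ?_⟩; simp; omega
      · rw [Finset.mem_Icc] at hi
        exact h i hi.1 hi.2
    have hcard : (Finset.Icc (1 : ℤ) (n : ℤ)).card = n := by
      rw [Int.card_Icc]; omega
    rw [Finset.sum_const, hcard] at this
    calc q * (n : ℝ) * (F.card : ℝ) = (n : ℝ) * (q * (F.card : ℝ)) := by ring
      _ < _ := by
          rw [show ((n : ℕ) : ℝ) * (q * (F.card : ℝ)) = (n : ℕ) • (q * (F.card : ℝ)) by
            simp [nsmul_eq_mul]]
          calc (n : ℕ) • (q * (F.card : ℝ)) < _ := this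
            _ = _ := by rw [← Nat.cast_sum, ← Nat.cast_sum, swap]
  by_contra hc
  push_neg at hc
  have : ∑ m ∈ F, (((Finset.Icc (m + 1) (m + (n : ℤ))).filter (· ∈ A)).card : ℝ)
      ≤ ∑ m ∈ F, q * (n : ℝ) := Finset.sum_le_sum (fun m hm => hc m hm)
  rw [Finset.sum_const, nsmul_eq_mul] at this
  nlinarith [hsum, this]
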